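/- Theorem (SFLA is no more conservative than LA): X_LA(κ) ⊆ X_SFLA(κ). Concretely, if for x there exist s ≥ 0, r ≥ 0 with εNs - Σ_i r_i ≥ θN and κ_i·min_p (b_p^T ξ_i + d_p - a_p^T x)/‖b_p‖_* ≥ s - r_i for all i ∈ [N] and p ∈ [P], then there exist s' ≥ 0, r' ≥ 0 satisfying the SFLA constraints: εNs' - Σ_i r_i' ≥ θN, κ_i·(b_p^T ξ_i + d_p - a_p^T x)/‖b_p‖_* ≥ s' - r_i' for i ∈ [N]_p, p ∈ [P], and (q_p + d_p - a_p^T x)/‖b_p‖_* ≥ s' for all p ∈ [P]. -/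

import Mathlib

/-- Dot product on `ℝ^n`. -/
def dotp {n : ℕ} (u v : Fin n → ℝ) : ℝ := ∑ j, u j * v j

/-- `kthSmallest t j` is the `(j+1)`-th smallest entry of the tuple `t`. -/
noncomputable def kthSmallest {N : ℕ} (t : Fin N → ℝ) (j : Fin N) : ℝ := t (Tuple.sort t j)

private lemma card_lt_kth {N k : ℕ} (hkN : k < N) (t : Fin N → ℝ) :
    (Finset.univ.filter (fun i => t i < t (Tuple.sort t ⟨k, hkN⟩))).card ≤ k := by
  classical
  have hsub : (Finset.univ.filter (fun i => t i < t (Tuple.sort t ⟨k, hkN⟩))) ⊆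
      (Finset.Iio (⟨k, hkN⟩ : Fin N)).image (Tuple.sort t) := by
    intro i hi
    simp only [Finset.mem_filter, Finset.mem_univ, true_and] at hi
    refine Finset.mem_image.2 ⟨(Tuple.sort t).symm i, ?_, by simp⟩
    rw [Finset.mem_Iio]
    by_contra hj
    push_neg at hj
    have h2 := Tuple.monotone_sort t hj
    simp only [Function.comp_apply, Equiv.apply_symm_apply] at h2
    linarith
  calc (Finset.univ.filter (fun i => t i < t (Tuple.sort t ⟨k, hkN⟩))).card
      ≤ _ := Finset.card_le_card hsub
    _ ≤ (Finset.Iio (⟨k, hkN⟩ : Fin N)).card := Finset.card_image_le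
    _ = k := Fin.card_Iio _

private lemma card_le_kth {N k : ℕ} (hkN : k < N) (t : Fin N → ℝ) :
    k + 1 ≤ (Finset.univ.filter (fun i => t i ≤ t (Tuple.sort t ⟨k, hkN⟩))).card := by
  classical
  have hsub : (Finset.Iic (⟨k, hkN⟩ : Fin N)).image (Tuple.sort t) ⊆
      Finset.univ.filter (fun i => t i ≤ t (Tuple.sort t ⟨k, hkN⟩)) := by
    intro i hi
    obtain ⟨j, hj, rfl⟩ := Finset.mem_image.1 hi
    simp only [Finset.mem_filter, Finset.mem_univ, true_and]
    exact Tuple.monotone_sort t (Finset.mem_Iic.1 hj)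
  calc (k + 1 : ℕ) = (Finset.Iic (⟨k, hkN⟩ : Fin N)).card := by rw [Fin.card_Iic]
    _ = ((Finset.Iic (⟨k, hkN⟩ : Fin N)).image (Tuple.sort t)).card :=
        (Finset.card_image_of_injective _ (Tuple.sort t).injective).symm
    _ ≤ _ := Finset.card_le_card hsub

private lemma exists_mem_not_mem {α : Type*} {s t : Finset α} (h : s.card < t.card) :
    ∃ a ∈ t, a ∉ s := by
  by_contra hc
  push_neg at hc
  exact absurd (Finset.card_le_card fun a ha => hc a ha) (not_le.2 h)

/-- `X_LA(κ) ⊆ X_SFLA(κ)`.  If some `(s, r)` satisfies the LA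
constraints `κ_i · min_p (b_p⬝ξ_i + d_p - a_p⬝x)/‖b_p‖_* ≥ s - r_i` for all `i`,
then some `(s', r')` satisfies the SFLA constraints (scaled constraints on
`i ∈ [N]_p` plus the valid inequalities). -/
theorem stmt13 {K L N P : ℕ} [NeZero P] (hN : 1 ≤ N)
    (ε θ : ℝ) (hε0 : 0 < ε) (hε1 : ε < 1) (hθ : 0 < θ)
    (ξ : Fin N → Fin K → ℝ) (x : Fin L → ℝ)
    (a : Fin P → Fin L → ℝ) (b : Fin P → Fin K → ℝ) (d : Fin P → ℝ)
    (hb : ∀ p, b p ≠ 0)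
    (nb : Fin P → ℝ) (hnb : ∀ p, 0 < nb p)  -- `nb p` stands for `‖b_p‖_*`
    (κ : Fin N → ℝ) (hκ0 : ∀ i, 0 ≤ κ i) (hκ1 : ∀ i, κ i ≤ 1)
    (k : ℕ) (hk : k = ⌊ε * N⌋₊) (hkN : k < N)
    (q : Fin P → ℝ)
    (hq : ∀ p, q p = kthSmallest (fun i => dotp (b p) (ξ i)) ⟨k, hkN⟩)
    (h : ∃ (s : ℝ) (r : Fin N → ℝ), 0 ≤ s ∧ (∀ i, 0 ≤ r i) ∧
        ε * N * s - ∑ i, r i ≥ θ * N ∧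
        ∀ i, κ i * Finset.univ.inf' Finset.univ_nonempty
            (fun p => (dotp (b p) (ξ i) + d p - dotp (a p) x) / nb p) ≥ s - r i) :
    ∃ (s' : ℝ) (r' : Fin N → ℝ), 0 ≤ s' ∧ (∀ i, 0 ≤ r' i) ∧
      ε * N * s' - ∑ i, r' i ≥ θ * N ∧
      (∀ p, ∀ i, dotp (b p) (ξ i) < q p →
        κ i * ((dotp (b p) (ξ i) + d p - dotp (a p) x) / nb p) ≥ s' - r' i) ∧
      ∀ p, (q p + d p - dotp (a p) x) / nb p ≥ s' := by
  classical
  obtain ⟨s, r, hs0, hr0, hsum, hcon⟩ := h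
  have hN0 : (0:ℝ) < N := by
    have : (1:ℝ) ≤ N := by exact_mod_cast hN
    linarith
  have hεN : (0:ℝ) < ε * N := mul_pos hε0 hN0
  have hkle : (k:ℝ) ≤ ε * N := by rw [hk]; exact Nat.floor_le hεN.le
  have hεNk : ε * (N:ℝ) < (k:ℝ) + 1 := by
    rw [hk]; exact_mod_cast Nat.lt_floor_add_one (ε * N)
  have hθN : (0:ℝ) < θ * N := mul_pos hθ hN0
  have hrs : (0:ℝ) ≤ ∑ i, r i := Finset.sum_nonneg fun i _ => hr0 i
  have hspos : 0 < s := by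
    by_contra hc
    push_neg at hc
    have h1 : ε * N * s ≤ 0 := mul_nonpos_of_nonneg_of_nonpos hεN.le hc
    linarith
  set dh : Fin N → ℝ := fun i => κ i *
    Finset.univ.inf' Finset.univ_nonempty
      (fun p => (dotp (b p) (ξ i) + d p - dotp (a p) x) / nb p) with hdh
  have hdcon : ∀ i, s - r i ≤ dh i := fun i => hcon i
  have hmf : ∀ (i : Fin N) (p : Fin P),
      Finset.univ.inf' Finset.univ_nonempty
        (fun p' => (dotp (b p') (ξ i) + d p' - dotp (a p') x) / nb p') ≤
      (dotp (b p) (ξ i) + d p - dotp (a p) x) / nb p :=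
    fun i p => Finset.inf'_le _ (Finset.mem_univ p)
  have hgood : ∀ i, r i < s → 0 < dh i ∧
      ∀ p, dh i ≤ (dotp (b p) (ξ i) + d p - dotp (a p) x) / nb p := by
    intro i hi
    have h1 : 0 < dh i := lt_of_lt_of_le (by linarith) (hdcon i)
    refine ⟨h1, fun p => ?_⟩
    simp only [hdh] at h1 ⊢
    have hMpos : 0 < Finset.univ.inf' Finset.univ_nonempty
        (fun p' => (dotp (b p') (ξ i) + d p' - dotp (a p') x) / nb p') := by
      nlinarith [hκ0 i, hκ1 i]
    nlinarith [hκ0 i, hκ1 i, hmf i p]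
  have hB : (Finset.univ.filter fun i => s ≤ r i).card ≤ k := by
    by_contra hc
    push_neg at hc
    have h2 : (k:ℝ) + 1 ≤ ((Finset.univ.filter fun i => s ≤ r i).card : ℝ) := by
      exact_mod_cast hc
    have h1 : ((Finset.univ.filter fun i => s ≤ r i).card : ℝ) * s ≤ ∑ i, r i := by
      calc ((Finset.univ.filter fun i => s ≤ r i).card : ℝ) * s
          = ∑ _i ∈ Finset.univ.filter fun i => s ≤ r i, s := by
            rw [Finset.sum_const, nsmul_eq_mul]
        _ ≤ ∑ i ∈ Finset.univ.filter fun i => s ≤ r i, r i :=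
            Finset.sum_le_sum fun i hi => (Finset.mem_filter.1 hi).2
        _ ≤ ∑ i, r i := Finset.sum_le_sum_of_subset_of_nonneg (Finset.filter_subset _ _)
            fun i _ _ => hr0 i
    have h3 := mul_lt_mul_of_pos_right hεNk hspos
    have h4 := mul_le_mul_of_nonneg_right h2 hspos.le
    linarith
  set s' := dh (Tuple.sort dh ⟨k, hkN⟩) with hs'def
  have hU : (Finset.univ.filter fun i => dh i < s').card ≤ k := by
    rw [hs'def]; exact card_lt_kth hkN dh
  have hV : k + 1 ≤ (Finset.univ.filter fun i => dh i ≤ s').card := by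
    rw [hs'def]; exact card_le_kth hkN dh
  have hs'pos : 0 < s' := by
    obtain ⟨i0, hi0V, hi0B⟩ := exists_mem_not_mem
      (lt_of_le_of_lt hB (Nat.lt_of_lt_of_le (Nat.lt_succ_self k) hV))
    simp only [Finset.mem_filter, Finset.mem_univ, true_and] at hi0V hi0B
    push_neg at hi0B
    exact lt_of_lt_of_le (hgood i0 hi0B).1 hi0V
  set r' : Fin N → ℝ := fun i => max 0 (s' - dh i) with hr'def
  have hr'0 : ∀ i, 0 ≤ r' i := by
    intro i; simp only [hr'def]; exact le_max_left _ _
  have hr'ge : ∀ i, s' - dh i ≤ r' i := by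
    intro i; simp only [hr'def]; exact le_max_right _ _
  have hsum' : ε * N * s' - ∑ i, r' i ≥ θ * N := by
    rcases le_or_gt s s' with hss | hss
    · have hbound : ∀ i, r' i ≤ r i + (if dh i < s' then s' - s else 0) := by
        intro i
        simp only [hr'def]
        by_cases hi : dh i < s'
        · rw [if_pos hi]
          exact max_le (by linarith [hr0 i]) (by linarith [hdcon i])
        · rw [if_neg hi]
          push_neg at hi
          rw [add_zero]
          exact max_le (hr0 i) (by linarith [hr0 i])
      have hsum1 : ∑ i, r' i ≤ ∑ i, r i +
          ((Finset.univ.filter fun i => dh i < s').card : ℝ) * (s' - s) := by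
        calc ∑ i, r' i ≤ ∑ i, (r i + if dh i < s' then s' - s else 0) :=
              Finset.sum_le_sum fun i _ => hbound i
          _ = ∑ i, r i + ∑ i, (if dh i < s' then s' - s else 0) := Finset.sum_add_distrib
          _ = ∑ i, r i + ((Finset.univ.filter fun i => dh i < s').card : ℝ) * (s' - s) := by
              rw [← Finset.sum_filter, Finset.sum_const, nsmul_eq_mul]
      have hcard : ((Finset.univ.filter fun i => dh i < s').card : ℝ) ≤ (k:ℝ) := by
        exact_mod_cast hU
      have hmul : ((Finset.univ.filter fun i => dh i < s').card : ℝ) * (s' - s) ≤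
          ε * N * (s' - s) :=
        mul_le_mul_of_nonneg_right (hcard.trans hkle) (by linarith)
      have hexp : ε * N * (s' - s) = ε * N * s' - ε * N * s := by ring
      linarith
    · have hbound : ∀ i, r' i ≤ r i - (if dh i ≤ s' then s - s' else 0) := by
        intro i
        simp only [hr'def]
        by_cases hi : dh i ≤ s'
        · rw [if_pos hi, max_eq_right (by linarith)]
          linarith [hdcon i]
        · rw [if_neg hi]
          push_neg at hi
          rw [sub_zero]
          exact max_le (hr0 i) (by linarith [hr0 i])
      have hsum1 : ∑ i, r' i ≤ ∑ i, r i -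
          ((Finset.univ.filter fun i => dh i ≤ s').card : ℝ) * (s - s') := by
        calc ∑ i, r' i ≤ ∑ i, (r i - if dh i ≤ s' then s - s' else 0) :=
              Finset.sum_le_sum fun i _ => hbound i
          _ = ∑ i, r i - ∑ i, (if dh i ≤ s' then s - s' else 0) := Finset.sum_sub_distrib _ _
          _ = ∑ i, r i - ((Finset.univ.filter fun i => dh i ≤ s').card : ℝ) * (s - s') := by
              rw [← Finset.sum_filter, Finset.sum_const, nsmul_eq_mul]
      have hcard : (k:ℝ) + 1 ≤ ((Finset.univ.filter fun i => dh i ≤ s').card : ℝ) := by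
        exact_mod_cast hV
      have hmul : ε * N * (s - s') ≤
          ((Finset.univ.filter fun i => dh i ≤ s').card : ℝ) * (s - s') :=
        mul_le_mul_of_nonneg_right (by linarith) (by linarith)
      have hexp : ε * N * (s - s') = ε * N * s - ε * N * s' := by ring
      linarith
  refine ⟨s', r', hs'pos.le, hr'0, hsum', ?_, ?_⟩
  · intro p i _
    have h1 : s' - r' i ≤ dh i := by linarith [hr'ge i]
    have h2 : dh i ≤ κ i * ((dotp (b p) (ξ i) + d p - dotp (a p) x) / nb p) := by
      simp only [hdh]
      exact mul_le_mul_of_nonneg_left (hmf i p) (hκ0 i)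
    exact le_trans h1 h2
  · intro p
    have hVp : k + 1 ≤ (Finset.univ.filter fun i => dotp (b p) (ξ i) ≤ q p).card := by
      have h := card_le_kth hkN (fun i => dotp (b p) (ξ i))
      rw [hq p]
      simp only [kthSmallest]
      exact h
    obtain ⟨i0, hi0V, hi0B⟩ := exists_mem_not_mem
      (lt_of_le_of_lt hB (Nat.lt_of_lt_of_le (Nat.lt_succ_self k) hVp))
    simp only [Finset.mem_filter, Finset.mem_univ, true_and] at hi0V hi0B
    push_neg at hi0B
    obtain ⟨hpos0, hle0⟩ := hgood i0 hi0B
    have hQ0 : 0 < (q p + d p - dotp (a p) x) / nb p := by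
      have h1 := hle0 p
      have hdiv : (dotp (b p) (ξ i0) + d p - dotp (a p) x) / nb p ≤
          (q p + d p - dotp (a p) x) / nb p :=
        (div_le_div_iff_of_pos_right (hnb p)).mpr (by linarith)
      linarith
    have hall : ∀ i, dotp (b p) (ξ i) ≤ q p →
        dh i ≤ (q p + d p - dotp (a p) x) / nb p := by
      intro i hi
      have hdiv : (dotp (b p) (ξ i) + d p - dotp (a p) x) / nb p ≤
          (q p + d p - dotp (a p) x) / nb p :=
        (div_le_div_iff_of_pos_right (hnb p)).mpr (by linarith)
      rcases le_or_gt (Finset.univ.inf' Finset.univ_nonempty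
          (fun p' => (dotp (b p') (ξ i) + d p' - dotp (a p') x) / nb p')) 0 with hM | hM
      · have h1 : dh i ≤ 0 := by
          simp only [hdh]
          nlinarith [hκ0 i]
        linarith
      · have h1 : dh i ≤ Finset.univ.inf' Finset.univ_nonempty
            (fun p' => (dotp (b p') (ξ i) + d p' - dotp (a p') x) / nb p') := by
          simp only [hdh]
          nlinarith [hκ0 i, hκ1 i]
        linarith [hmf i p]
    obtain ⟨i1, hi1V, hi1U⟩ := exists_mem_not_mem
      (lt_of_le_of_lt hU (Nat.lt_of_lt_of_le (Nat.lt_succ_self k) hVp))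
    simp only [Finset.mem_filter, Finset.mem_univ, true_and] at hi1V hi1U
    push_neg at hi1U
    exact le_trans hi1U (hall i1 hi1V)
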